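/- Let n ≥ 2, 1 ≤ k ≤ n−1, and let a·x ≥ α be a non boolean non rank facet defining inequality of Q(C_n^k) with positive integer coefficients, and set a^0 = min{a_i : i ∈ Z_n} and W = {i ∈ Z_n : a_i > a^0}. Then ∅ ⊊ W ⊊ Z_n, α ≥ a^0·(⌈n/k⌉ + 1), and every minimum cover x of C_n^k satisfies x ∩ W ≠ ∅. -/

import Mathlib

/-- `Cseg n k i` is the set `C^i = {i, i+1, …, i+k−1} ⊆ ℤ_n`. -/
def Cseg (n k : ℕ) (i : ZMod n) : Finset (ZMod n) :=
  (Finset.range k).image fun h : ℕ => i + (h : ZMod n)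

/-- A cover of the circulant matrix `C_n^k`. -/
def IsCover (n k : ℕ) (x : Finset (ZMod n)) : Prop :=
  ∀ i : ZMod n, (x ∩ Cseg n k i).Nonempty

/-- A minimal cover of `C_n^k`. -/
def IsMinimalCover (n k : ℕ) (x : Finset (ZMod n)) : Prop :=
  IsCover n k x ∧ ∀ y : Finset (ZMod n), y ⊂ x → ¬ IsCover n k y

/-- The covering number `τ(C_n^k)`. -/
noncomputable def coveringNumber (n k : ℕ) : ℕ :=
  sInf {m : ℕ | ∃ x : Finset (ZMod n), IsCover n k x ∧ x.card = m}

/-- A minimum cover of `C_n^k`. -/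
noncomputable def IsMinimumCover (n k : ℕ) (x : Finset (ZMod n)) : Prop :=
  IsCover n k x ∧ x.card = coveringNumber n k

/-- `xcov n k i` is the cover `x^i = {i + h·k : 0 ≤ h ≤ ⌈n/k⌉ − 1}`. -/
def xcov (n k : ℕ) (i : ZMod n) : Finset (ZMod n) :=
  (Finset.range ((n + k - 1) / k)).image fun h : ℕ => i + ((h * k : ℕ) : ZMod n)

/-- The cyclic closed interval `[a,b]_n` of `ℤ_n`. -/
def cycInterval (n : ℕ) (a b : ZMod n) : Finset (ZMod n) :=
  (Finset.range ((b - a).val + 1)).image fun h : ℕ => a + (h : ZMod n)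

/-- The inequality `a·x ≥ α` is valid for `Q(C_n^k)`. -/
def IsValid (n k : ℕ) (a : ZMod n → ℤ) (α : ℤ) : Prop :=
  ∀ x : Finset (ZMod n), IsCover n k x → α ≤ ∑ i ∈ x, a i

/-- A root of a valid inequality: a cover satisfying it with equality. -/
def IsRoot (n k : ℕ) (a : ZMod n → ℤ) (α : ℤ) (x : Finset (ZMod n)) : Prop :=
  IsCover n k x ∧ ∑ i ∈ x, a i = α

/-- Characteristic vector of a subset of `ℤ_n`. -/
noncomputable def charVec (n : ℕ) (x : Finset (ZMod n)) : ZMod n → ℝ :=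
  fun i => if i ∈ x then 1 else 0

/-- `a·x ≥ α` is facet defining for `Q(C_n^k)`: it is valid, and the characteristic
vectors of its roots affinely span an `(n−1)`-dimensional affine subspace of `ℝ^n`. -/
def IsFacet (n k : ℕ) (a : ZMod n → ℤ) (α : ℤ) : Prop :=
  IsValid n k a α ∧
    Module.finrank ℝ
      (affineSpan ℝ
        {v : ZMod n → ℝ | ∃ x : Finset (ZMod n), IsRoot n k a α x ∧ v = charVec n x}).direction
      = n - 1

/-- `a·x ≥ α` is a positive multiple of one of the boolean inequalities
`x_i ≥ 0`, `−x_i ≥ −1`, `∑_{j ∈ C^i} x_j ≥ 1`. -/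
def IsBooleanMultiple (n k : ℕ) (a : ZMod n → ℤ) (α : ℤ) : Prop :=
  ∃ c : ℤ, 0 < c ∧
    ( (∃ i : ZMod n, (∀ j, a j = if j = i then c else 0) ∧ α = 0)
    ∨ (∃ i : ZMod n, (∀ j, a j = if j = i then -c else 0) ∧ α = -c)
    ∨ (∃ i : ZMod n, (∀ j, a j = if j ∈ Cseg n k i then c else 0) ∧ α = c) )

/-- `a·x ≥ α` is a positive multiple of the rank constraint `∑ x_i ≥ ⌈n/k⌉`. -/
def IsRankMultiple (n k : ℕ) (a : ZMod n → ℤ) (α : ℤ) : Prop :=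
  ∃ c : ℤ, 0 < c ∧ (∀ j, a j = c) ∧ α = c * (((n + k - 1) / k : ℕ) : ℤ)

/- ### Auxiliary combinatorial lemmas -/

lemma ceil_mul_ge (n k : ℕ) (hk : 1 ≤ k) : n ≤ ((n + k - 1) / k) * k := by
  rcases Nat.eq_zero_or_pos n with h | h
  · simp [h]
  have he : n + k - 1 = (n - 1) + k := by omega
  rw [he, Nat.add_div_right _ (by omega)]
  have h1 := Nat.div_add_mod (n - 1) k
  have h2 := Nat.mod_lt (n - 1) (show 0 < k by omega)
  have hcomm : k * ((n - 1) / k) = ((n - 1) / k) * k := mul_comm _ _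
  have hd : ((n - 1) / k + 1) * k = ((n - 1) / k) * k + k := by ring
  omega

lemma ceil_le_iff (n k m : ℕ) (hk : 1 ≤ k) : (n + k - 1) / k ≤ m ↔ n ≤ m * k := by
  constructor
  · intro h
    exact le_trans (ceil_mul_ge n k hk) (Nat.mul_le_mul_right k h)
  · intro h
    by_contra hc
    push_neg at hc
    have h2 : (m + 1) * k ≤ ((n + k - 1) / k) * k := Nat.mul_le_mul_right k hc
    have h3 : ((n + k - 1) / k) * k ≤ n + k - 1 := Nat.div_mul_le_self _ _
    have h4 : (m + 1) * k = m * k + k := by ring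
    omega

lemma cover_lb (n k : ℕ) (hn : 2 ≤ n) (hk : 1 ≤ k) (x : Finset (ZMod n))
    (hx : IsCover n k x) : (n + k - 1) / k ≤ x.card := by
  haveI : NeZero n := ⟨by omega⟩
  rw [ceil_le_iff _ _ _ hk]
  have hsub : (Finset.univ : Finset (ZMod n)) ⊆
      x.biUnion (fun j => Finset.univ.filter (fun i => j ∈ Cseg n k i)) := by
    intro i _
    obtain ⟨j, hj⟩ := hx i
    rw [Finset.mem_inter] at hj
    exact Finset.mem_biUnion.2 ⟨j, hj.1, Finset.mem_filter.2 ⟨Finset.mem_univ _, hj.2⟩⟩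
  have h1 : (Finset.univ : Finset (ZMod n)).card ≤
      ∑ j ∈ x, (Finset.univ.filter (fun i => j ∈ Cseg n k i)).card :=
    le_trans (Finset.card_le_card hsub) Finset.card_biUnion_le
  have h2 : ∀ j : ZMod n, (Finset.univ.filter (fun i => j ∈ Cseg n k i)).card ≤ k := by
    intro j
    have hss : Finset.univ.filter (fun i => j ∈ Cseg n k i) ⊆
        (Finset.range k).image (fun h : ℕ => j - (h : ZMod n)) := by
      intro i hi
      rw [Finset.mem_filter] at hi
      obtain ⟨h, hh, he⟩ := Finset.mem_image.1 hi.2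
      rw [Finset.mem_range] at hh
      exact Finset.mem_image.2 ⟨h, Finset.mem_range.2 hh, by rw [← he]; ring⟩
    calc (Finset.univ.filter (fun i => j ∈ Cseg n k i)).card
        ≤ ((Finset.range k).image (fun h : ℕ => j - (h : ZMod n))).card :=
          Finset.card_le_card hss
      _ ≤ k := le_trans Finset.card_image_le (by simp)
  calc n = (Finset.univ : Finset (ZMod n)).card := by simp [ZMod.card]
    _ ≤ ∑ j ∈ x, (Finset.univ.filter (fun i => j ∈ Cseg n k i)).card := h1
    _ ≤ ∑ j ∈ x, k := Finset.sum_le_sum (fun j _ => h2 j)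
    _ = x.card * k := by simp [Finset.sum_const, mul_comm]

lemma xcov_card (n k : ℕ) : (xcov n k 0).card ≤ (n + k - 1) / k :=
  le_trans Finset.card_image_le (by simp)

lemma xcov_cover (n k : ℕ) (hn : 2 ≤ n) (hk : 1 ≤ k) : IsCover n k (xcov n k 0) := by
  haveI : NeZero n := ⟨by omega⟩
  set t := (n + k - 1) / k with ht
  have htk : n ≤ t * k := ceil_mul_ge n k hk
  have ht1 : 1 ≤ t := by
    rcases Nat.eq_zero_or_pos t with h0 | h0
    · rw [h0, zero_mul] at htk; omega
    · exact h0
  intro i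
  set v := i.val with hv
  have hvn : v < n := ZMod.val_lt i
  have hiv : ((v : ℕ) : ZMod n) = i := by
    rw [hv, ZMod.natCast_val, ZMod.cast_id]
  by_cases hc : v ≤ (t - 1) * k
  · set h := (v + k - 1) / k with hh
    have hhk1 : v ≤ h * k := ceil_mul_ge v k hk
    have hhk2 : h * k ≤ v + k - 1 := Nat.div_mul_le_self _ _
    have hht : h ≤ t - 1 := (ceil_le_iff v k (t - 1) hk).2 hc
    refine ⟨((h * k : ℕ) : ZMod n), Finset.mem_inter.2 ⟨?_, ?_⟩⟩
    · exact Finset.mem_image.2 ⟨h, Finset.mem_range.2 (by omega), by rw [zero_add]⟩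
    · refine Finset.mem_image.2 ⟨h * k - v, Finset.mem_range.2 (by omega), ?_⟩
      rw [← hiv, ← Nat.cast_add]
      congr 1
      omega
  · push_neg at hc
    have h5 : (t - 1) * k + k = t * k := by
      have h6 : t - 1 + 1 = t := by omega
      calc (t - 1) * k + k = (t - 1 + 1) * k := by ring
        _ = t * k := by rw [h6]
    refine ⟨((0 * k : ℕ) : ZMod n), Finset.mem_inter.2 ⟨?_, ?_⟩⟩
    · exact Finset.mem_image.2 ⟨0, Finset.mem_range.2 (by omega), by rw [zero_add]⟩
    · refine Finset.mem_image.2 ⟨n - v, Finset.mem_range.2 (by omega), ?_⟩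
      rw [← hiv, ← Nat.cast_add]
      have hnv : v + (n - v) = n := by omega
      rw [hnv]
      simp

/- ### Linear-algebra lemmas -/

noncomputable def lfun (n : ℕ) [NeZero n] (c : ZMod n → ℝ) : (ZMod n → ℝ) →ₗ[ℝ] ℝ where
  toFun v := ∑ i, c i * v i
  map_add' u v := by simp [mul_add, Finset.sum_add_distrib]
  map_smul' r v := by simp [Finset.mul_sum]; ring_nf; simp [mul_assoc, mul_comm, mul_left_comm]

lemma lfun_apply (n : ℕ) [NeZero n] (c v : ZMod n → ℝ) :
    lfun n c v = ∑ i, c i * v i := rfl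

lemma lfun_charVec (n : ℕ) [NeZero n] (c : ZMod n → ℝ) (x : Finset (ZMod n)) :
    lfun n c (charVec n x) = ∑ i ∈ x, c i := by
  rw [lfun_apply]
  simp only [charVec, mul_ite, mul_one, mul_zero]
  rw [Finset.sum_ite_mem, Finset.univ_inter]

lemma lfun_single (n : ℕ) [NeZero n] (c : ZMod n → ℝ) (j : ZMod n) :
    lfun n c (Pi.single j 1) = c j := by
  rw [lfun_apply]
  simp [Pi.single_apply, mul_ite, Finset.sum_ite_eq']

lemma dim_le (n : ℕ) (hn : 2 ≤ n) (S : Set (ZMod n → ℝ))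
    (f g : (ZMod n → ℝ) →ₗ[ℝ] ℝ) (c d : ℝ)
    (hf : ∀ v ∈ S, f v = c) (hg : ∀ v ∈ S, g v = d)
    (u : ZMod n → ℝ) (hu1 : f u = 0) (hu2 : g u ≠ 0)
    (u' : ZMod n → ℝ) (hu' : f u' ≠ 0) :
    Module.finrank ℝ (affineSpan ℝ S).direction ≤ n - 2 := by
  haveI : NeZero n := ⟨by omega⟩
  have hdim : Module.finrank ℝ (ZMod n → ℝ) = n := by
    simp [Module.finrank_pi, ZMod.card]
  have hle : (affineSpan ℝ S).direction ≤ LinearMap.ker f ⊓ LinearMap.ker g := by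
    rw [direction_affineSpan, vectorSpan_def, Submodule.span_le]
    rintro w ⟨v1, hv1, v2, hv2, rfl⟩
    rw [SetLike.mem_coe]
    simp only [Submodule.mem_inf, LinearMap.mem_ker, vsub_eq_sub, map_sub]
    rw [hf v1 hv1, hf v2 hv2, hg v1 hv1, hg v2 hv2]
    simp
  have hrange : LinearMap.range f = ⊤ := by
    rw [LinearMap.range_eq_top]
    intro r
    exact ⟨(r / f u') • u', by rw [map_smul, smul_eq_mul, div_mul_cancel₀ r hu']⟩
  have hkerf : Module.finrank ℝ (LinearMap.ker f) = n - 1 := by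
    have h := LinearMap.finrank_range_add_finrank_ker f
    rw [hrange, hdim] at h
    simp only [finrank_top, Module.finrank_self] at h
    omega
  have hlt : LinearMap.ker f ⊓ LinearMap.ker g < LinearMap.ker f := by
    refine lt_of_le_of_ne inf_le_left (fun h => ?_)
    have hm : u ∈ LinearMap.ker f ⊓ LinearMap.ker g := by
      rw [h]; exact LinearMap.mem_ker.2 hu1
    exact hu2 (LinearMap.mem_ker.1 hm.2)
  have h2 : Module.finrank ℝ (LinearMap.ker f ⊓ LinearMap.ker g : Submodule ℝ _) <
      Module.finrank ℝ (LinearMap.ker f) := Submodule.finrank_lt_finrank_of_lt hlt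
  have h3 := Submodule.finrank_mono hle
  omega

lemma roots_exist (n k : ℕ) (hn : 2 ≤ n) (a : ZMod n → ℤ) (α : ℤ)
    (hfacet : IsFacet n k a α) : ∃ x : Finset (ZMod n), IsRoot n k a α x := by
  by_contra hre
  push_neg at hre
  have hset : {v : ZMod n → ℝ | ∃ x : Finset (ZMod n), IsRoot n k a α x ∧ v = charVec n x}
      = ∅ := by
    rw [Set.eq_empty_iff_forall_notMem]
    rintro v ⟨x, hx, _⟩
    exact hre x hx
  have h2 := hfacet.2
  rw [hset] at h2
  rw [show (affineSpan ℝ (∅ : Set (ZMod n → ℝ))) = ⊥ from AffineSubspace.span_empty ℝ _ _,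
    AffineSubspace.direction_bot] at h2
  rw [finrank_bot] at h2
  omega

theorem stmt2 (n k : ℕ) (hn : 2 ≤ n) (hk1 : 1 ≤ k) (hk2 : k ≤ n - 1)
    (a : ZMod n → ℤ) (α : ℤ) (hpos : ∀ i : ZMod n, 1 ≤ a i)
    (hfacet : IsFacet n k a α)
    (hnonbool : ¬ IsBooleanMultiple n k a α) (hnonrank : ¬ IsRankMultiple n k a α)
    (a0 : ℤ) (ha0 : IsLeast (Set.range a) a0) :
    (∃ i : ZMod n, a0 < a i) ∧ (∃ i : ZMod n, ¬ a0 < a i) ∧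
    a0 * ((((n + k - 1) / k : ℕ) : ℤ) + 1) ≤ α ∧
    ∀ x : Finset (ZMod n), IsMinimumCover n k x → ∃ i ∈ x, a0 < a i := by
  haveI : NeZero n := ⟨by omega⟩
  obtain ⟨i0, hi0⟩ := ha0.1
  have hlow : ∀ i, a0 ≤ a i := fun i => ha0.2 ⟨i, rfl⟩
  have ha0pos : 1 ≤ a0 := hi0 ▸ hpos i0
  set t := (n + k - 1) / k with htdef
  -- sum over a cover is at least a0 * card
  have hsum_lb : ∀ x : Finset (ZMod n), a0 * (x.card : ℤ) ≤ ∑ i ∈ x, a i := by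
    intro x
    calc a0 * (x.card : ℤ) = ∑ _i ∈ x, a0 := by
          simp [Finset.sum_const, nsmul_eq_mul, mul_comm]
      _ ≤ ∑ i ∈ x, a i := Finset.sum_le_sum (fun i _ => hlow i)
  -- Part 1 : some coefficient exceeds a0
  have part1 : ∃ i : ZMod n, a0 < a i := by
    by_contra hno
    push_neg at hno
    have hconst : ∀ i, a i = a0 := fun i => le_antisymm (hno i) (hlow i)
    obtain ⟨x, hx⟩ := roots_exist n k hn a α hfacet
    have hxsum : ∑ i ∈ x, a i = (x.card : ℤ) * a0 := by
      rw [Finset.sum_congr rfl (fun i _ => hconst i)]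
      simp [Finset.sum_const, nsmul_eq_mul]
    have hcard : t ≤ x.card := cover_lb n k hn hk1 x hx.1
    have hαlb : a0 * (t : ℤ) ≤ α := by
      rw [← hx.2, hxsum]
      have : (t : ℤ) ≤ (x.card : ℤ) := by exact_mod_cast hcard
      nlinarith
    have hαub : α ≤ a0 * (t : ℤ) := by
      have hv := hfacet.1 (xcov n k 0) (xcov_cover n k hn hk1)
      have hxs : ∑ i ∈ xcov n k 0, a i = ((xcov n k 0).card : ℤ) * a0 := by
        rw [Finset.sum_congr rfl (fun i _ => hconst i)]
        simp [Finset.sum_const, nsmul_eq_mul]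
      rw [hxs] at hv
      have hc2 : ((xcov n k 0).card : ℤ) ≤ (t : ℤ) := by exact_mod_cast xcov_card n k
      nlinarith
    exact hnonrank ⟨a0, by omega, hconst, by rw [← htdef]; omega⟩
  -- Part 3 : α ≥ a0 (t + 1)
  have part3 : a0 * ((t : ℤ) + 1) ≤ α := by
    by_contra hno
    push_neg at hno
    -- every root has cardinality exactly t
    have hcard : ∀ x : Finset (ZMod n), IsRoot n k a α x → x.card = t := by
      intro x hx
      have h1 : t ≤ x.card := cover_lb n k hn hk1 x hx.1
      have h2 : a0 * (x.card : ℤ) ≤ α := hx.2 ▸ hsum_lb x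
      have h3 : a0 * (x.card : ℤ) < a0 * ((t : ℤ) + 1) := lt_of_le_of_lt h2 hno
      have h4 : (x.card : ℤ) < (t : ℤ) + 1 :=
        lt_of_mul_lt_mul_left h3 (by omega)
      have h5 : x.card ≤ t := by exact_mod_cast Int.lt_add_one_iff.1 h4
      omega
    -- dimension argument
    set S := {v : ZMod n → ℝ | ∃ x : Finset (ZMod n), IsRoot n k a α x ∧ v = charVec n x}
      with hS
    obtain ⟨w, hw⟩ := part1
    have hwi0 : i0 ≠ w := by
      intro h
      rw [← h, hi0] at hw
      exact lt_irrefl _ hw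
    set f := lfun n (fun i => (a i : ℝ)) with hf
    set g := lfun n (fun _ => (1 : ℝ)) with hg
    set u := (a w : ℝ) • (Pi.single i0 1 : ZMod n → ℝ) - (a i0 : ℝ) • (Pi.single w 1 : ZMod n → ℝ) with hu
    have hdim := dim_le n hn S f g (α : ℝ) (t : ℝ)
      (by
        rintro v ⟨x, hx, rfl⟩
        rw [hf, lfun_charVec]
        rw [← hx.2]
        push_cast
        rfl)
      (by
        rintro v ⟨x, hx, rfl⟩
        rw [hg, lfun_charVec]
        rw [Finset.sum_const, ← hcard x hx]
        simp)
      u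
      (by
        rw [hu, map_sub, map_smul, map_smul, hf, lfun_single, lfun_single]
        simp [mul_comm])
      (by
        rw [hu, map_sub, map_smul, map_smul, hg, lfun_single, lfun_single]
        simp only [smul_eq_mul, mul_one]
        have : (a i0 : ℝ) < (a w : ℝ) := by exact_mod_cast (hi0 ▸ hw)
        intro hcon
        have := sub_eq_zero.1 hcon
        linarith)
      ((Pi.single i0 1 : ZMod n → ℝ))
      (by
        rw [hf, lfun_single]
        have h1 : (1 : ℝ) ≤ (a i0 : ℝ) := by exact_mod_cast hpos i0
        intro hcon
        rw [hcon] at h1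
        linarith)
    have h2 : Module.finrank ℝ (affineSpan ℝ S).direction = n - 1 := hfacet.2
    omega
  refine ⟨part1, ⟨i0, by rw [hi0]; exact lt_irrefl a0⟩, part3, ?_⟩
  -- Part 4 : every minimum cover meets W
  intro x hx
  by_contra hno
  push_neg at hno
  have hxa : ∀ i ∈ x, a i = a0 := fun i hi => le_antisymm (hno i hi) (hlow i)
  have hcn : coveringNumber n k ≤ t :=
    le_trans (Nat.sInf_le ⟨xcov n k 0, xcov_cover n k hn hk1, rfl⟩) (xcov_card n k)
  have hcard : x.card ≤ t := hx.2 ▸ hcn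
  have hs : ∑ i ∈ x, a i = (x.card : ℤ) * a0 := by
    rw [Finset.sum_congr rfl hxa]
    simp [Finset.sum_const, nsmul_eq_mul]
  have hv := hfacet.1 x hx.1
  rw [hs] at hv
  have hc2 : (x.card : ℤ) ≤ (t : ℤ) := by exact_mod_cast hcard
  nlinarith [part3, hv, hc2, ha0pos]
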